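/- arXiv:2604.04249 — 2 statements merged into one kernel-verified Lean document; each statement's English description precedes it below -/
import Mathlib

section
/- For a non-degenerate sample x₁,...,xₙ of positive reals, the empirical Atkinson index ordering holds: for ε < 2, Â(ε) < Ĵ, and for ε > 2, Â(ε) > Ĵ, where Ĵ = 1 - n²/(Σᵢ xᵢ · Σⱼ 1/xⱼ) and Â(ε) = 1 - ((1/n)Σᵢ xᵢ^{1-ε})^{1/(1-ε)} / x̄. -/
open Finset Set

lemma strictConvexOn_rpow_neg {t : ℝ} (ht : t < 0) :
    StrictConvexOn ℝ (Set.Ioi (0:ℝ)) fun u : ℝ ↦ u ^ t := by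
  apply strictConvexOn_of_deriv2_pos (convex_Ioi 0)
  · exact fun u hu =>
      (Real.continuousAt_rpow_const _ _ (Or.inl (ne_of_gt hu))).continuousWithinAt
  · intro u hu
    rw [interior_Ioi] at hu
    have hu' : (0:ℝ) < u := hu
    have hev : deriv (fun u : ℝ ↦ u ^ t) =ᶠ[nhds u] fun v : ℝ ↦ t * v ^ (t - 1) := by
      filter_upwards [eventually_ne_nhds (ne_of_gt hu')] with v hv
      exact Real.deriv_rpow_const v t
    have h2 : deriv^[2] (fun u : ℝ ↦ u ^ t) u
        = deriv (fun v : ℝ ↦ t * v ^ (t - 1)) u := by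
      show deriv (deriv (fun u : ℝ ↦ u ^ t)) u = _
      exact hev.deriv_eq
    have h3 : HasDerivAt (fun v : ℝ ↦ t * v ^ (t - 1)) (t * ((t - 1) * u ^ (t - 1 - 1))) u :=
      (Real.hasDerivAt_rpow_const (Or.inl hu'.ne')).const_mul t
    rw [h2, h3.deriv]
    have hp : 0 < u ^ (t - 1 - 1) := Real.rpow_pos_of_pos hu' _
    nlinarith [mul_pos_of_neg_of_neg ht (by linarith : t - 1 < 0)]

open Finset Set

lemma weight_sum {n : ℕ} (hn : 0 < n) : ∑ _i : Fin n, (1 / (n:ℝ)) = 1 := by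
  rw [Finset.sum_const, Finset.card_univ, Fintype.card_fin, nsmul_eq_mul]
  field_simp

lemma univ_ne {n : ℕ} (hn : 0 < n) : (Finset.univ : Finset (Fin n)).Nonempty :=
  ⟨⟨0, hn⟩, Finset.mem_univ _⟩

lemma jensen_pm {n : ℕ} (hn : 0 < n) (a : Fin n → ℝ) (hne : ∃ i j, a i ≠ a j)
    {s : Set ℝ} {f : ℝ → ℝ} (hf : StrictConvexOn ℝ s f) (hmem : ∀ i, a i ∈ s) :
    f ((1 / (n:ℝ)) * ∑ i, a i) < (1 / (n:ℝ)) * ∑ i, f (a i) := by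
  obtain ⟨i, j, hij⟩ := hne
  have h := hf.map_sum_lt (t := Finset.univ) (w := fun _ => 1 / (n:ℝ)) (p := a)
    (fun i _ => by positivity) (weight_sum hn) (fun i _ => hmem i)
    ⟨i, Finset.mem_univ i, j, Finset.mem_univ j, hij⟩
  simpa only [smul_eq_mul, ← Finset.mul_sum] using h

lemma pm_lt_am {n : ℕ} (hn : 0 < n) (a : Fin n → ℝ) (ha : ∀ i, 0 < a i)
    (hne : ∃ i j, a i ≠ a j) {t : ℝ} (ht0 : t ≠ 0) (ht1 : t < 1) :
    ((1 / (n:ℝ)) * ∑ i, a i ^ t) ^ (1/t) < (1 / (n:ℝ)) * ∑ i, a i := by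
  have hA : 0 < (1 / (n:ℝ)) * ∑ i, a i := by
    have : 0 < ∑ i, a i := Finset.sum_pos (fun i _ => ha i) (univ_ne hn)
    positivity
  have hQ : 0 < (1 / (n:ℝ)) * ∑ i, a i ^ t := by
    have : 0 < ∑ i, a i ^ t := Finset.sum_pos
      (fun i _ => Real.rpow_pos_of_pos (ha i) t) (univ_ne hn)
    positivity
  rcases lt_or_gt_of_ne ht0 with htneg | htpos
  · have h := jensen_pm hn a hne (strictConvexOn_rpow_neg htneg)
      (fun i => Set.mem_Ioi.mpr (ha i))
    have h2 := Real.rpow_lt_rpow_of_neg (Real.rpow_pos_of_pos hA t) h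
      (one_div_neg.mpr htneg)
    rwa [← Real.rpow_mul hA.le, mul_one_div_cancel ht0, Real.rpow_one] at h2
  · have h := (Real.strictConcaveOn_rpow htpos ht1).lt_map_sum
      (t := Finset.univ) (w := fun _ => 1 / (n:ℝ)) (p := a)
      (fun i _ => by positivity) (weight_sum hn) (fun i _ => (ha i).le)
      (by obtain ⟨i, j, hij⟩ := hne; exact ⟨i, Finset.mem_univ i, j, Finset.mem_univ j, hij⟩)
    simp only [smul_eq_mul, ← Finset.mul_sum] at h
    have h2 := Real.rpow_lt_rpow hQ.le h (by positivity : 0 < 1/t)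
    rwa [← Real.rpow_mul hA.le, mul_one_div_cancel ht0, Real.rpow_one] at h2

lemma am_lt_pm {n : ℕ} (hn : 0 < n) (a : Fin n → ℝ) (ha : ∀ i, 0 < a i)
    (hne : ∃ i j, a i ≠ a j) {t : ℝ} (ht1 : 1 < t) :
    (1 / (n:ℝ)) * ∑ i, a i < ((1 / (n:ℝ)) * ∑ i, a i ^ t) ^ (1/t) := by
  have hA : 0 < (1 / (n:ℝ)) * ∑ i, a i := by
    have : 0 < ∑ i, a i := Finset.sum_pos (fun i _ => ha i) (univ_ne hn)
    positivity
  have h := jensen_pm hn a hne (strictConvexOn_rpow ht1)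
    (fun i => Set.mem_Ici.mpr (ha i).le)
  have h2 := Real.rpow_lt_rpow (Real.rpow_pos_of_pos hA t).le h
    (by positivity : 0 < 1/t)
  rwa [← Real.rpow_mul hA.le, mul_one_div_cancel (by linarith : t ≠ 0),
    Real.rpow_one] at h2

theorem empirical_atkinson_vs_ahi (n : ℕ) (hn : 0 < n) (x : Fin n → ℝ)
    (hpos : ∀ i, 0 < x i) (hnondeg : ∃ i j, x i ≠ x j) (ε : ℝ) (hε : ε ≠ 1) :
    (ε < 2 →
      1 - ((1 / (n : ℝ)) * ∑ i, x i ^ (1 - ε)) ^ (1 / (1 - ε)) / ((1 / (n : ℝ)) * ∑ i, x i)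
        < 1 - (((1 / (n : ℝ)) * ∑ i, x i) * ((1 / (n : ℝ)) * ∑ i, (x i)⁻¹))⁻¹) ∧
    (2 < ε →
      1 - (((1 / (n : ℝ)) * ∑ i, x i) * ((1 / (n : ℝ)) * ∑ i, (x i)⁻¹))⁻¹
        < 1 - ((1 / (n : ℝ)) * ∑ i, x i ^ (1 - ε)) ^ (1 / (1 - ε)) / ((1 / (n : ℝ)) * ∑ i, x i)) := by
  have ht0 : ε - 1 ≠ 0 := sub_ne_zero.mpr hε
  have hapos : ∀ i, 0 < (x i)⁻¹ := fun i => inv_pos.mpr (hpos i)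
  have hane : ∃ i j, (x i)⁻¹ ≠ (x j)⁻¹ := by
    obtain ⟨i, j, hij⟩ := hnondeg
    exact ⟨i, j, fun h => hij (inv_injective h)⟩
  have hxpos : 0 < ∑ i, x i := Finset.sum_pos (fun i _ => hpos i) (univ_ne hn)
  have hipos : 0 < ∑ i, (x i)⁻¹ := Finset.sum_pos (fun i _ => hapos i) (univ_ne hn)
  have hQ' : 0 < ∑ i, (x i)⁻¹ ^ (ε - 1) :=
    Finset.sum_pos (fun i _ => Real.rpow_pos_of_pos (hapos i) _) (univ_ne hn)
  have hnR : (0:ℝ) < n := Nat.cast_pos.mpr hn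
  have hA : 0 < (1 / (n:ℝ)) * ∑ i, x i := by positivity
  have hB : 0 < (1 / (n:ℝ)) * ∑ i, (x i)⁻¹ := by positivity
  have hQ : 0 < (1 / (n:ℝ)) * ∑ i, (x i)⁻¹ ^ (ε - 1) := by positivity
  have hsum : ∑ i, x i ^ (1 - ε) = ∑ i, (x i)⁻¹ ^ (ε - 1) := by
    refine Finset.sum_congr rfl fun i _ => ?_
    rw [show (1 - ε) = -(ε - 1) by ring, Real.rpow_neg (hpos i).le,
        ← Real.inv_rpow (hpos i).le]
  have hM : ((1 / (n:ℝ)) * ∑ i, x i ^ (1 - ε)) ^ (1 / (1 - ε))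
      = (((1 / (n:ℝ)) * ∑ i, (x i)⁻¹ ^ (ε - 1)) ^ (1 / (ε - 1)))⁻¹ := by
    rw [hsum, show (1 - ε) = -(ε - 1) by ring, div_neg, Real.rpow_neg hQ.le]
  set A := (1 / (n:ℝ)) * ∑ i, x i with hAdef
  set B := (1 / (n:ℝ)) * ∑ i, (x i)⁻¹ with hBdef
  set R := ((1 / (n:ℝ)) * ∑ i, (x i)⁻¹ ^ (ε - 1)) ^ (1 / (ε - 1)) with hRdef
  have hR : 0 < R := Real.rpow_pos_of_pos hQ _
  rw [hM]
  have hdiv : R⁻¹ / A = (A * R)⁻¹ := by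
    rw [mul_inv, div_eq_mul_inv, mul_comm]
  constructor
  · intro h2
    have hlt : R < B :=
      pm_lt_am hn (fun i => (x i)⁻¹) hapos hane ht0 (by linarith)
    apply sub_lt_sub_left
    rw [hdiv]
    gcongr
  · intro h2
    have hlt : B < R :=
      am_lt_pm hn (fun i => (x i)⁻¹) hapos hane (by linarith)
    apply sub_lt_sub_left
    rw [hdiv]
    gcongr
end

section
/- If X₁,...,Xₙ are i.i.d. positive random variables with E[Xᵢ] < ∞ and E[1/Xᵢ] < ∞, then E[Ĵ] = 1 - n² ∫₀^∞∫₀^∞ (E[exp(-sX - t/X)])^n ds dt, where Ĵ = 1 - n²/((ΣXᵢ)(Σ1/Xⱼ)). -/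
open MeasureTheory ProbabilityTheory

lemma aux_exp_lintegral {a : ℝ} (ha : 0 < a) :
    ∫⁻ x in Set.Ioi (0:ℝ), ENNReal.ofReal (Real.exp (-(x * a))) = ENNReal.ofReal a⁻¹ := by
  rw [← ofReal_integral_eq_lintegral_ofReal]
  · congr 1
    have h := MeasureTheory.integral_comp_mul_right_Ioi (fun y => Real.exp (-y)) 0 ha
    simp only [zero_mul, integral_exp_neg_Ioi, neg_zero, Real.exp_zero, smul_eq_mul,
      mul_one] at h
    exact h
  · simpa [neg_mul, mul_comm, IntegrableOn] using exp_neg_integrableOn_Ioi 0 ha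
  · exact Filter.Eventually.of_forall fun x => (Real.exp_pos _).le

lemma aux_integral_prod {Ω ι : Type*} [MeasurableSpace Ω] {μ : Measure Ω} [IsProbabilityMeasure μ]
    {Y : ι → Ω → ℝ} (hY : iIndepFun Y μ)
    (hm : ∀ i, Measurable (Y i)) (hint : ∀ i, Integrable (Y i) μ) (s : Finset ι) :
    Integrable (fun ω => ∏ i ∈ s, Y i ω) μ ∧
      ∫ ω, ∏ i ∈ s, Y i ω ∂μ = ∏ i ∈ s, ∫ ω, Y i ω ∂μ := by
  classical
  induction s using Finset.induction_on with
  | empty => simp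
  | @insert i s hi ih =>
    have hIndep : IndepFun (Y i) (fun ω => ∏ j ∈ s, Y j ω) μ := by
      have := (hY.indepFun_finsetProd_of_notMem hm hi).symm
      have e : (∏ j ∈ s, Y j) = fun ω => ∏ j ∈ s, Y j ω := by
        ext ω; simp [Finset.prod_apply]
      rwa [e] at this
    have hprodint : Integrable (fun ω => ∏ j ∈ s, Y j ω) μ := ih.1
    have hmul : Integrable (fun ω => Y i ω * ∏ j ∈ s, Y j ω) μ := by
      have := hIndep.integrable_mul (hint i) hprodint
      simpa [Pi.mul_def] using this
    constructor
    · simpa [Finset.prod_insert hi] using hmul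
    · have := hIndep.integral_mul_eq_mul_integral (hint i).aestronglyMeasurable hprodint.aestronglyMeasurable
      simp only [Finset.prod_insert hi]
      rw [show (Y i * fun ω => ∏ j ∈ s, Y j ω) = fun ω => Y i ω * ∏ j ∈ s, Y j ω from rfl] at this
      rw [this, ih.2]

set_option maxHeartbeats 1000000 in
theorem expectation_Jhat_integral_representation {Ω : Type*} [MeasurableSpace Ω]
    (μ : Measure Ω) [IsProbabilityMeasure μ] (n : ℕ) (hn : 0 < n)
    (X : Fin n → Ω → ℝ) (X₀ : Ω → ℝ) (hmeas : ∀ i, Measurable (X i))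
    (hpos : ∀ i, ∀ᵐ ω ∂μ, 0 < X i ω)
    (hindep : iIndepFun X μ)
    (hid : ∀ i, IdentDistrib (X i) X₀ μ μ)
    (hint : Integrable X₀ μ) (hint' : Integrable (fun ω => (X₀ ω)⁻¹) μ) :
    ∫ ω, (1 - (n : ℝ) ^ 2 / ((∑ i, X i ω) * ∑ j, (X j ω)⁻¹)) ∂μ
      = 1 - (n : ℝ) ^ 2 *
          ∫ s in Set.Ioi (0 : ℝ), ∫ t in Set.Ioi (0 : ℝ),
            (∫ ω, Real.exp (-(s * X₀ ω) - t / X₀ ω) ∂μ) ^ n := by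
  classical
  haveI : Nonempty (Fin n) := Fin.pos_iff_nonempty.mp hn
  have hSmeas : Measurable fun ω => ∑ i, X i ω := Finset.measurable_sum _ fun i _ => hmeas i
  have hTmeas : Measurable fun ω => ∑ j, (X j ω)⁻¹ :=
    Finset.measurable_sum _ fun i _ => (hmeas i).inv
  have hae : ∀ᵐ ω ∂μ, ∀ i, 0 < X i ω := ae_all_iff.2 hpos
  -- positivity and Cauchy–Schwarz bound
  have hST : ∀ᵐ ω ∂μ, 0 < (∑ i, X i ω) ∧ 0 < (∑ j, (X j ω)⁻¹) ∧
      (n:ℝ)^2 ≤ (∑ i, X i ω) * ∑ j, (X j ω)⁻¹ := by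
    filter_upwards [hae] with ω hω
    have h1 : 0 < ∑ i, X i ω := Finset.sum_pos (fun i _ => hω i) Finset.univ_nonempty
    have h2 : 0 < ∑ j, (X j ω)⁻¹ :=
      Finset.sum_pos (fun i _ => inv_pos.2 (hω i)) Finset.univ_nonempty
    refine ⟨h1, h2, ?_⟩
    have hcs := Finset.sum_mul_sq_le_sq_mul_sq Finset.univ
      (fun i => Real.sqrt (X i ω)) (fun i => (Real.sqrt (X i ω))⁻¹)
    have e1 : ∀ i : Fin n, Real.sqrt (X i ω) * (Real.sqrt (X i ω))⁻¹ = 1 := fun i =>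
      mul_inv_cancel₀ (ne_of_gt (Real.sqrt_pos.2 (hω i)))
    have e2 : ∀ i : Fin n, Real.sqrt (X i ω) ^ 2 = X i ω := fun i => Real.sq_sqrt (hω i).le
    have e3 : ∀ i : Fin n, ((Real.sqrt (X i ω))⁻¹) ^ 2 = (X i ω)⁻¹ := fun i => by
      rw [inv_pow, e2]
    calc ((n:ℝ))^2
        = (∑ i : Fin n, Real.sqrt (X i ω) * (Real.sqrt (X i ω))⁻¹) ^ 2 := by
          simp only [e1, Finset.sum_const, Finset.card_univ, Fintype.card_fin, nsmul_eq_mul,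
            mul_one]
      _ ≤ (∑ i : Fin n, Real.sqrt (X i ω) ^ 2) * ∑ i : Fin n, ((Real.sqrt (X i ω))⁻¹) ^ 2 := hcs
      _ = (∑ i, X i ω) * ∑ j, (X j ω)⁻¹ := by
          rw [Finset.sum_congr rfl fun i _ => e2 i, Finset.sum_congr rfl fun i _ => e3 i]
  have hSTmeas : Measurable fun ω => ((∑ i, X i ω) * ∑ j, (X j ω)⁻¹)⁻¹ := (hSmeas.mul hTmeas).inv
  have hn2 : (0:ℝ) < (n:ℝ)^2 := by positivity
  have hintST : Integrable (fun ω => ((∑ i, X i ω) * ∑ j, (X j ω)⁻¹)⁻¹) μ := by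
    refine Integrable.mono' (integrable_const (((n:ℝ)^2)⁻¹)) hSTmeas.aestronglyMeasurable ?_
    filter_upwards [hST] with ω hω
    obtain ⟨h1, h2, h3⟩ := hω
    rw [Real.norm_eq_abs, abs_of_nonneg (inv_nonneg.2 (mul_nonneg h1.le h2.le))]
    exact inv_anti₀ hn2 h3
  have hSTnonneg : 0 ≤ᵐ[μ] fun ω => ((∑ i, X i ω) * ∑ j, (X j ω)⁻¹)⁻¹ := by
    filter_upwards [hST] with ω hω
    exact inv_nonneg.2 (mul_nonneg hω.1.le hω.2.1.le)
  -- replace X₀ by a measurable representative Z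
  have hX₀ae : AEMeasurable X₀ μ := (hid ⟨0, hn⟩).aemeasurable_snd
  set Z : Ω → ℝ := hX₀ae.mk X₀ with hZ
  have hZmeas : Measurable Z := hX₀ae.measurable_mk
  have hZeq : X₀ =ᵐ[μ] Z := hX₀ae.ae_eq_mk
  have hid' : ∀ i, IdentDistrib (X i) Z μ μ := fun i =>
    (hid i).trans ⟨hX₀ae, hZmeas.aemeasurable, Measure.map_congr hZeq⟩
  have goalrw : ∀ s t : ℝ, (∫ ω, Real.exp (-(s * X₀ ω) - t / X₀ ω) ∂μ)
      = ∫ ω, Real.exp (-(s * Z ω) - t / Z ω) ∂μ := by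
    intro s t
    refine integral_congr_ae ?_
    filter_upwards [hZeq] with ω h
    rw [h]
  simp only [goalrw]
  -- notation
  set ν := (volume : Measure ℝ).restrict (Set.Ioi (0:ℝ)) with hν
  -- measurability of the joint kernel
  have hq : Measurable fun q : Ω × (ℝ × ℝ) =>
      ENNReal.ofReal (Real.exp (-(q.2.1 * ∑ i, X i q.1) - q.2.2 * ∑ j, (X j q.1)⁻¹)) :=
    ((((measurable_snd.fst.mul (hSmeas.comp measurable_fst)).neg).sub
      (measurable_snd.snd.mul (hTmeas.comp measurable_fst))).exp).ennreal_ofReal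
  -- Step D : inner lintegral over ω for fixed s,t > 0
  have hD : ∀ s ∈ Set.Ioi (0:ℝ), ∀ t ∈ Set.Ioi (0:ℝ),
      (∫⁻ ω, ENNReal.ofReal (Real.exp (-(s * ∑ i, X i ω) - t * ∑ j, (X j ω)⁻¹)) ∂μ)
        = ENNReal.ofReal ((∫ ω, Real.exp (-(s * Z ω) - t / Z ω) ∂μ) ^ n) := by
    intro s hs t ht
    rw [Set.mem_Ioi] at hs ht
    set g : ℝ → ℝ := fun x => Real.exp (-(s * x) - t / x) with hg
    have hgmeas : Measurable g := ((measurable_const.mul measurable_id).neg.sub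
      (measurable_const.div measurable_id)).exp
    have hYindep : iIndepFun (fun i => g ∘ X i) μ :=
      hindep.comp (fun _ => g) fun _ => hgmeas
    have hYmeas : ∀ i, Measurable (g ∘ X i) := fun i => hgmeas.comp (hmeas i)
    have hYint : ∀ i, Integrable (g ∘ X i) μ := by
      intro i
      refine Integrable.mono' (integrable_const 1) (hYmeas i).aestronglyMeasurable ?_
      filter_upwards [hpos i] with ω hω
      rw [Function.comp_apply, hg, Real.norm_eq_abs, abs_of_pos (Real.exp_pos _)]
      refine Real.exp_le_one_iff.2 ?_
      have h1 : 0 < s * X i ω := mul_pos hs hω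
      have h2 : 0 < t / X i ω := div_pos ht hω
      linarith
    obtain ⟨hPint, hPeq⟩ := aux_integral_prod (Y := fun i => g ∘ X i) hYindep hYmeas hYint Finset.univ
    have hsum : ∀ ω, ∑ i, (-(s * X i ω) - t * (X i ω)⁻¹)
        = -(s * ∑ i, X i ω) - t * ∑ j, (X j ω)⁻¹ := by
      intro ω
      rw [Finset.sum_sub_distrib, Finset.sum_neg_distrib, ← Finset.mul_sum, ← Finset.mul_sum]
    have hprod : ∀ ω : Ω, Real.exp (-(s * ∑ i, X i ω) - t * ∑ j, (X j ω)⁻¹)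
        = ∏ i, (g ∘ X i) ω := by
      intro ω
      rw [← hsum ω, Real.exp_sum]
      refine Finset.prod_congr rfl fun i _ => ?_
      simp [hg, div_eq_mul_inv]
    calc (∫⁻ ω, ENNReal.ofReal (Real.exp (-(s * ∑ i, X i ω) - t * ∑ j, (X j ω)⁻¹)) ∂μ)
        = ∫⁻ ω, ENNReal.ofReal (∏ i, (g ∘ X i) ω) ∂μ := by
          refine lintegral_congr fun ω => ?_
          rw [hprod ω]
      _ = ENNReal.ofReal (∫ ω, ∏ i, (g ∘ X i) ω ∂μ) :=
          (ofReal_integral_eq_lintegral_ofReal hPint (Filter.Eventually.of_forall fun ω =>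
            Finset.prod_nonneg fun i _ => (Real.exp_pos _).le)).symm
      _ = ENNReal.ofReal (∏ i : Fin n, ∫ ω, (g ∘ X i) ω ∂μ) := by rw [hPeq]
      _ = ENNReal.ofReal ((∫ ω, Real.exp (-(s * Z ω) - t / Z ω) ∂μ) ^ n) := by
          have hone : ∀ i : Fin n, ∫ ω, (g ∘ X i) ω ∂μ
              = ∫ ω, Real.exp (-(s * Z ω) - t / Z ω) ∂μ := by
            intro i
            exact ((hid' i).comp hgmeas).integral_eq
          rw [Finset.prod_congr rfl fun i _ => hone i, Finset.prod_const, Finset.card_univ,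
            Fintype.card_fin]
  -- Step A+B : expectation of (S*T)⁻¹ as a triple lintegral
  have hA : ENNReal.ofReal (∫ ω, ((∑ i, X i ω) * ∑ j, (X j ω)⁻¹)⁻¹ ∂μ)
      = ∫⁻ ω, ENNReal.ofReal (((∑ i, X i ω) * ∑ j, (X j ω)⁻¹)⁻¹) ∂μ :=
    ofReal_integral_eq_lintegral_ofReal hintST hSTnonneg
  have hB : (∫⁻ ω, ENNReal.ofReal (((∑ i, X i ω) * ∑ j, (X j ω)⁻¹)⁻¹) ∂μ)
      = ∫⁻ ω, (∫⁻ s, (∫⁻ t,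
          ENNReal.ofReal (Real.exp (-(s * ∑ i, X i ω) - t * ∑ j, (X j ω)⁻¹)) ∂ν) ∂ν) ∂μ := by
    refine lintegral_congr_ae ?_
    filter_upwards [hST] with ω hω
    obtain ⟨h1, h2, _⟩ := hω
    symm
    have hmeasT : Measurable fun t : ℝ =>
        ENNReal.ofReal (Real.exp (-(t * ∑ j, (X j ω)⁻¹))) := by fun_prop
    have hmeasS : Measurable fun s : ℝ =>
        ENNReal.ofReal (Real.exp (-(s * ∑ i, X i ω))) := by fun_prop
    calc (∫⁻ s, (∫⁻ t,
            ENNReal.ofReal (Real.exp (-(s * ∑ i, X i ω) - t * ∑ j, (X j ω)⁻¹)) ∂ν) ∂ν)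
        = ∫⁻ s, ENNReal.ofReal (Real.exp (-(s * ∑ i, X i ω)))
            * ENNReal.ofReal ((∑ j, (X j ω)⁻¹)⁻¹) ∂ν := by
          refine lintegral_congr fun s => ?_
          have hpt : ∀ t : ℝ, ENNReal.ofReal
              (Real.exp (-(s * ∑ i, X i ω) - t * ∑ j, (X j ω)⁻¹))
              = ENNReal.ofReal (Real.exp (-(s * ∑ i, X i ω)))
                * ENNReal.ofReal (Real.exp (-(t * ∑ j, (X j ω)⁻¹))) := by
            intro t
            rw [← ENNReal.ofReal_mul (Real.exp_pos _).le, ← Real.exp_add, sub_eq_add_neg]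
          simp_rw [hpt]
          rw [lintegral_const_mul _ hmeasT, aux_exp_lintegral h2]
      _ = (∫⁻ s, ENNReal.ofReal (Real.exp (-(s * ∑ i, X i ω))) ∂ν)
            * ENNReal.ofReal ((∑ j, (X j ω)⁻¹)⁻¹) := by
          rw [lintegral_mul_const _ hmeasS]
      _ = ENNReal.ofReal ((∑ i, X i ω)⁻¹) * ENNReal.ofReal ((∑ j, (X j ω)⁻¹)⁻¹) := by
          rw [aux_exp_lintegral h1]
      _ = ENNReal.ofReal (((∑ i, X i ω) * ∑ j, (X j ω)⁻¹)⁻¹) := by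
          rw [← ENNReal.ofReal_mul (inv_nonneg.2 h1.le), mul_inv]
  -- Step C : Tonelli swap
  have hC : (∫⁻ ω, (∫⁻ s, (∫⁻ t,
        ENNReal.ofReal (Real.exp (-(s * ∑ i, X i ω) - t * ∑ j, (X j ω)⁻¹)) ∂ν) ∂ν) ∂μ)
      = ∫⁻ s, (∫⁻ t, (∫⁻ ω,
          ENNReal.ofReal (Real.exp (-(s * ∑ i, X i ω) - t * ∑ j, (X j ω)⁻¹)) ∂μ) ∂ν) ∂ν := by
    have h1 : ∀ ω : Ω, (∫⁻ s, (∫⁻ t,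
        ENNReal.ofReal (Real.exp (-(s * ∑ i, X i ω) - t * ∑ j, (X j ω)⁻¹)) ∂ν) ∂ν)
        = ∫⁻ p,
            ENNReal.ofReal (Real.exp (-(p.1 * ∑ i, X i ω) - p.2 * ∑ j, (X j ω)⁻¹)) ∂(ν.prod ν) := by
      intro ω
      exact (lintegral_prod _ ((hq.comp (measurable_const.prodMk measurable_id)).aemeasurable)).symm
    have h2 := lintegral_lintegral_swap (μ := μ) (ν := ν.prod ν)
      (f := fun ω p => ENNReal.ofReal
        (Real.exp (-(p.1 * ∑ i, X i ω) - p.2 * ∑ j, (X j ω)⁻¹))) hq.aemeasurable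
    have h3 : (∫⁻ p, (∫⁻ ω,
        ENNReal.ofReal (Real.exp (-(p.1 * ∑ i, X i ω) - p.2 * ∑ j, (X j ω)⁻¹)) ∂μ) ∂(ν.prod ν))
        = ∫⁻ s, (∫⁻ t, (∫⁻ ω,
            ENNReal.ofReal (Real.exp (-(s * ∑ i, X i ω) - t * ∑ j, (X j ω)⁻¹)) ∂μ) ∂ν) ∂ν :=
      lintegral_prod _ (hq.lintegral_prod_left'.aemeasurable)
    rw [lintegral_congr h1, h2, h3]
  -- combine into hmain
  have hmain : ENNReal.ofReal (∫ ω, ((∑ i, X i ω) * ∑ j, (X j ω)⁻¹)⁻¹ ∂μ)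
      = ∫⁻ s, (∫⁻ t,
          ENNReal.ofReal ((∫ ω, Real.exp (-(s * Z ω) - t / Z ω) ∂μ) ^ n) ∂ν) ∂ν := by
    rw [hA, hB, hC]
    refine lintegral_congr_ae ?_
    filter_upwards [ae_restrict_mem measurableSet_Ioi] with s hs
    refine lintegral_congr_ae ?_
    filter_upwards [ae_restrict_mem measurableSet_Ioi] with t ht
    exact hD s hs t ht
  -- Step E : convert double lintegral back to a Bochner double integral
  have hjoint : Measurable fun p : (ℝ × ℝ) × Ω =>
      Real.exp (-(p.1.1 * Z p.2) - p.1.2 / Z p.2) :=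
    (((measurable_fst.fst.mul (hZmeas.comp measurable_snd)).neg).sub
      ((measurable_fst.snd).div (hZmeas.comp measurable_snd))).exp
  have hKmeas : Measurable fun p : ℝ × ℝ => ∫ ω, Real.exp (-(p.1 * Z ω) - p.2 / Z ω) ∂μ :=
    hjoint.stronglyMeasurable.integral_prod_right'.measurable
  have hFmeas : Measurable fun p : ℝ × ℝ =>
      ENNReal.ofReal ((∫ ω, Real.exp (-(p.1 * Z ω) - p.2 / Z ω) ∂μ) ^ n) :=
    (hKmeas.pow_const n).ennreal_ofReal
  have hinnermeas : Measurable fun s : ℝ => ∫⁻ t,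
      ENNReal.ofReal ((∫ ω, Real.exp (-(s * Z ω) - t / Z ω) ∂μ) ^ n) ∂ν :=
    Measurable.lintegral_prod_right (f := fun s t =>
      ENNReal.ofReal ((∫ ω, Real.exp (-(s * Z ω) - t / Z ω) ∂μ) ^ n)) hFmeas
  have hLfin : (∫⁻ s, (∫⁻ t,
      ENNReal.ofReal ((∫ ω, Real.exp (-(s * Z ω) - t / Z ω) ∂μ) ^ n) ∂ν) ∂ν) ≠ ⊤ := by
    rw [← hmain]; exact ENNReal.ofReal_ne_top
  have haefin : ∀ᵐ s ∂ν, (∫⁻ t,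
      ENNReal.ofReal ((∫ ω, Real.exp (-(s * Z ω) - t / Z ω) ∂μ) ^ n) ∂ν) < ⊤ :=
    ae_lt_top hinnermeas hLfin
  have hEnonneg : ∀ s t : ℝ, 0 ≤ ∫ ω, Real.exp (-(s * Z ω) - t / Z ω) ∂μ := fun s t =>
    integral_nonneg fun ω => (Real.exp_pos _).le
  have hEinner : ∀ s : ℝ, (∫ t, (∫ ω, Real.exp (-(s * Z ω) - t / Z ω) ∂μ) ^ n ∂ν)
      = (∫⁻ t, ENNReal.ofReal ((∫ ω, Real.exp (-(s * Z ω) - t / Z ω) ∂μ) ^ n) ∂ν).toReal := by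
    intro s
    rw [integral_eq_lintegral_of_nonneg_ae
      (Filter.Eventually.of_forall fun t => pow_nonneg (hEnonneg s t) n)
      ((hKmeas.comp (measurable_const.prodMk measurable_id)).pow_const n).aestronglyMeasurable]
  have hRHS : (∫ s, (∫ t, (∫ ω, Real.exp (-(s * Z ω) - t / Z ω) ∂μ) ^ n ∂ν) ∂ν)
      = (∫⁻ s, (∫⁻ t,
          ENNReal.ofReal ((∫ ω, Real.exp (-(s * Z ω) - t / Z ω) ∂μ) ^ n) ∂ν) ∂ν).toReal := by
    rw [show (fun s => ∫ t, (∫ ω, Real.exp (-(s * Z ω) - t / Z ω) ∂μ) ^ n ∂ν)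
        = fun s => (∫⁻ t, ENNReal.ofReal
            ((∫ ω, Real.exp (-(s * Z ω) - t / Z ω) ∂μ) ^ n) ∂ν).toReal from funext hEinner]
    exact integral_toReal hinnermeas.aemeasurable haefin
  have key : (∫ ω, ((∑ i, X i ω) * ∑ j, (X j ω)⁻¹)⁻¹ ∂μ)
      = ∫ s, (∫ t, (∫ ω, Real.exp (-(s * Z ω) - t / Z ω) ∂μ) ^ n ∂ν) ∂ν := by
    rw [hRHS, ← hmain, ENNReal.toReal_ofReal (integral_nonneg_of_ae hSTnonneg)]
  -- finish
  have hgoal1 : (fun ω => (1 : ℝ) - (n:ℝ)^2 / ((∑ i, X i ω) * ∑ j, (X j ω)⁻¹))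
      = fun ω => 1 - (n:ℝ)^2 * ((∑ i, X i ω) * ∑ j, (X j ω)⁻¹)⁻¹ :=
    funext fun ω => by rw [div_eq_mul_inv]
  rw [hgoal1, integral_sub (integrable_const 1) (hintST.const_mul ((n:ℝ)^2)),
    integral_const, integral_const_mul, key]
  simp [measure_univ]
end
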